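/- arXiv:2008.06155 — 9 statements merged into one kernel-verified Lean document; each statement's English description precedes it below -/
import Mathlib

section
/- For all nonnegative integers n and r and every real (or polynomial variable) x, the rising factorial satisfies ⟨x+2r⟩_n = Σ_{k=0}^{n} L_r(n,k) * (x)_k, where ⟨y⟩_n = y(y+1)···(y+n-1) is the rising factorial and (x)_k = x(x-1)···(x-k+1) is the falling factorial. -/
open Finset

/-- The `r`-Lah numbers `L_r(n,k) = (n!/k!) * C(n+2r-1, k+2r-1)` for `k ≤ n`, and `0` otherwise. -/
def rLah (r n k : ℕ) : ℕ :=
  if k ≤ n then n.factorial / k.factorial * Nat.choose (n + 2 * r - 1) (n - k) else 0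

/-- Stirling numbers of the second kind. -/
def stirling2 : ℕ → ℕ → ℕ
  | 0, 0 => 1
  | 0, _ + 1 => 0
  | _ + 1, 0 => 0
  | n + 1, k + 1 => (k + 1) * stirling2 n (k + 1) + stirling2 n k

/-- Signed Stirling numbers of the first kind, satisfying `(x)_n = Σ_k s(n,k) x^k`. -/
def stirling1 : ℕ → ℕ → ℤ
  | 0, 0 => 1
  | 0, _ + 1 => 0
  | _ + 1, 0 => 0
  | n + 1, k + 1 => stirling1 n k - (n : ℤ) * stirling1 n (k + 1)

/-- Bell numbers. -/
def bell (n : ℕ) : ℕ := ∑ k ∈ Finset.range (n + 1), stirling2 n k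

/-- The `r`-extended Bell numbers `B_{n,r} = Σ_k C(n,k) r^(n-k) B_k`. -/
def bellExt (n r : ℕ) : ℕ :=
  ∑ k ∈ Finset.range (n + 1), Nat.choose n k * r ^ (n - k) * bell k

/-- The `r`-extended Lah-Bell numbers `B^L_{n,r} = Σ_{k=0}^n L_r(n,k)`. -/
def lahBellExt (n r : ℕ) : ℕ := ∑ k ∈ Finset.range (n + 1), rLah r n k

/-- Stirling polynomials of the second kind `S₂(n,k|x) = Σ_j C(n,j) x^(n-j) S₂(j,k)`,
evaluated at a natural number `x`. -/
def stirling2Poly (n k x : ℕ) : ℕ :=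
  ∑ j ∈ Finset.Icc k n, Nat.choose n j * x ^ (n - j) * stirling2 j k

lemma choose_key (n r k : ℕ) (h1 : 1 ≤ k) (h2 : k ≤ n) :
    (n+1) * Nat.choose (n+2*r) (n+1-k) =
      k * Nat.choose (n+2*r-1) (n+1-k) + (n+k+2*r) * Nat.choose (n+2*r-1) (n-k) := by
  obtain ⟨j, hj⟩ : ∃ j, n - k = j := ⟨n - k, rfl⟩
  obtain ⟨m, hm⟩ : ∃ m, n + 2*r - 1 = m := ⟨_, rfl⟩
  have hn1k : n + 1 - k = j + 1 := by omega
  have hm1 : n + 2*r = m + 1 := by omega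
  have hmj : m - j = k + 2*r - 1 := by omega
  simp only [hn1k, hj, hm]
  simp only [hm1]
  have pascal : Nat.choose (m+1) (j+1) = Nat.choose m j + Nat.choose m (j+1) :=
    Nat.choose_succ_succ m j
  have hc : Nat.choose m (j+1) * (j+1) = Nat.choose m j * (m - j) :=
    Nat.choose_succ_right_eq m j
  rw [hmj] at hc
  rw [pascal]
  zify at hc ⊢
  have hc' : (Nat.choose m (j+1) : ℤ) * ((j:ℤ) + 1) = Nat.choose m j * ((k:ℤ) + 2*r - 1) := by
    have h9 : ((k + 2*r - 1 : ℕ) : ℤ) = (k:ℤ) + 2*r - 1 := by omega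
    rw [← h9]; exact_mod_cast hc
  have hjk : (j:ℤ) = (n:ℤ) - k := by omega
  rw [hjk] at hc'
  linear_combination hc'

lemma choose_base (n r : ℕ) :
    (n+1) * Nat.choose (n+2*r) (n+1) = (n+2*r) * Nat.choose (n+2*r-1) n := by
  rcases r with _ | r
  · rcases n with _ | n
    · simp
    · simp [Nat.choose_eq_zero_of_lt, Nat.choose_eq_zero_of_lt (by omega : n + 1 + 2*0 - 1 < n+1)]
  · obtain ⟨m, hm⟩ : ∃ m, n + 2*(r+1) - 1 = m := ⟨_, rfl⟩
    have hm1 : n + 2*(r+1) = m + 1 := by omega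
    rw [hm, hm1]
    have h := Nat.add_one_mul_choose_eq m n
    rw [h]
    exact mul_comm _ _

lemma rLah_cast (r n k : ℕ) (h : k ≤ n) :
    (rLah r n k : ℝ) = (n.factorial : ℝ) / k.factorial * Nat.choose (n+2*r-1) (n-k) := by
  rw [rLah, if_pos h, Nat.cast_mul,
    Nat.cast_div (Nat.factorial_dvd_factorial h) (by exact_mod_cast k.factorial_ne_zero)]

lemma rLah_zero_succ (r n : ℕ) : (rLah r (n+1) 0 : ℝ) = ((n:ℝ) + 2*r) * rLah r n 0 := by
  rw [rLah_cast r (n+1) 0 (by omega), rLah_cast r n 0 (by omega)]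
  simp only [Nat.sub_zero, Nat.factorial_zero, Nat.cast_one, div_one]
  have hb := choose_base n r
  have hfs : ((n+1).factorial : ℝ) = (n+1) * n.factorial := by
    rw [Nat.factorial_succ]; push_cast; ring
  rw [hfs]
  have h1 : n + 1 + 2*r - 1 = n + 2*r := by omega
  rw [h1]
  have hb' : ((n:ℝ)+1) * Nat.choose (n+2*r) (n+1) = ((n:ℝ)+2*r) * Nat.choose (n+2*r-1) n := by
    exact_mod_cast hb
  nlinarith [hb']

lemma rLah_rec (r n k : ℕ) (h : k ≤ n) :
    (rLah r (n+1) (k+1) : ℝ) = rLah r n k + ((n:ℝ) + (k+1) + 2*r) * rLah r n (k+1) := by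
  rcases eq_or_lt_of_le h with rfl | hlt
  · have h0 : rLah r k (k+1) = 0 := by rw [rLah, if_neg (by omega)]
    have h1 : rLah r (k+1) (k+1) = 1 := by
      rw [rLah, if_pos le_rfl]; simp [Nat.div_self (Nat.factorial_pos (k+1))]
    have h2 : rLah r k k = 1 := by
      rw [rLah, if_pos le_rfl]; simp [Nat.div_self (Nat.factorial_pos k)]
    rw [h0, h1, h2]; simp
  · have hk1 : k + 1 ≤ n := hlt
    rw [rLah_cast r (n+1) (k+1) (by omega), rLah_cast r n k (by omega),
      rLah_cast r n (k+1) hk1]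
    have e1 : n + 1 - (k+1) = n - k := by omega
    have e2 : n + 1 + 2*r - 1 = n + 2*r := by omega
    have e3 : n - (k+1) = n - k - 1 := by omega
    rw [e1, e2, e3]
    have hkey := choose_key n r (k+1) (by omega) (by omega)
    rw [(by omega : n + 1 - (k+1) = n - k), (by omega : n - (k+1) = n - k - 1)] at hkey
    have hkey' : ((n:ℝ)+1) * Nat.choose (n+2*r) (n-k) =
        ((k:ℝ)+1) * Nat.choose (n+2*r-1) (n-k) +
        ((n:ℝ)+(k+1)+2*r) * Nat.choose (n+2*r-1) (n-k-1) := by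
      exact_mod_cast hkey
    have hf : ((n+1).factorial : ℝ) = (n+1) * n.factorial := by
      rw [Nat.factorial_succ]; push_cast; ring
    have hf2 : ((k+1).factorial : ℝ) = (k+1) * k.factorial := by
      rw [Nat.factorial_succ]; push_cast; ring
    rw [hf, hf2]
    have hkf : (k.factorial : ℝ) ≠ 0 := by exact_mod_cast k.factorial_ne_zero
    have hk1f : (k:ℝ) + 1 ≠ 0 := by positivity
    field_simp
    linear_combination hkey'


/-- `⟨x+2r⟩_n = Σ_{k=0}^n L_r(n,k) (x)_k`, where `⟨y⟩_n` is the rising factorial and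
`(x)_k` the falling factorial. -/
theorem ascFactorial_eq_sum_rLah_descFactorial (n r : ℕ) (x : ℝ) :
    (ascPochhammer ℝ n).eval (x + 2 * r) =
      ∑ k ∈ Finset.range (n + 1), (rLah r n k : ℝ) * (descPochhammer ℝ k).eval x := by
  induction n with
  | zero => simp [rLah]
  | succ n ih =>
    have lhs : (ascPochhammer ℝ (n+1)).eval (x + 2*r) =
        (ascPochhammer ℝ n).eval (x + 2*r) * (x + 2*r + n) := by
      rw [ascPochhammer_succ_right]
      simp [Polynomial.eval_mul]
    rw [lhs, ih, Finset.sum_mul]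
    have hd : ∀ k : ℕ, (rLah r n k : ℝ) * (descPochhammer ℝ k).eval x * (x + 2*r + n) =
        (rLah r n k : ℝ) * (descPochhammer ℝ (k+1)).eval x +
          ((n:ℝ) + k + 2*r) * (rLah r n k : ℝ) * (descPochhammer ℝ k).eval x := by
      intro k
      have hD : (descPochhammer ℝ (k+1)).eval x = (descPochhammer ℝ k).eval x * (x - k) := by
        rw [descPochhammer_succ_right]
        simp [Polynomial.eval_mul]
      rw [hD]; ring
    rw [Finset.sum_congr rfl fun k _ => hd k, Finset.sum_add_distrib]
    -- RHS expansion
    rw [Finset.sum_range_succ' (fun k => (rLah r (n+1) k : ℝ) * (descPochhammer ℝ k).eval x) (n+1)]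
    have hrec : ∀ k ∈ Finset.range (n+1),
        (rLah r (n+1) (k+1) : ℝ) * (descPochhammer ℝ (k+1)).eval x =
        (rLah r n k : ℝ) * (descPochhammer ℝ (k+1)).eval x +
          ((n:ℝ) + (k+1) + 2*r) * (rLah r n (k+1) : ℝ) * (descPochhammer ℝ (k+1)).eval x := by
      intro k hk
      rw [rLah_rec r n k (by simpa using Nat.lt_succ_iff.mp (Finset.mem_range.mp hk))]
      ring
    rw [Finset.sum_congr rfl hrec, Finset.sum_add_distrib]
    simp only [descPochhammer_zero, Polynomial.eval_one, mul_one, rLah_zero_succ]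
    -- remains to match the two "second" sums
    have step : ∑ k ∈ Finset.range (n+1), ((n:ℝ) + k + 2*r) * (rLah r n k : ℝ) * (descPochhammer ℝ k).eval x =
        (∑ k ∈ Finset.range (n+1), ((n:ℝ) + (k+1) + 2*r) * (rLah r n (k+1) : ℝ) * (descPochhammer ℝ (k+1)).eval x)
          + ((n:ℝ) + 2*r) * (rLah r n 0 : ℝ) := by
      rw [Finset.sum_range_succ' (fun k => ((n:ℝ) + k + 2*r) * (rLah r n k : ℝ) * (descPochhammer ℝ k).eval x) n]
      rw [Finset.sum_range_succ (fun k => ((n:ℝ) + (k+1) + 2*r) * (rLah r n (k+1) : ℝ) * (descPochhammer ℝ (k+1)).eval x) n]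
      have h0 : rLah r n (n+1) = 0 := by rw [rLah, if_neg (by omega)]
      simp [h0]
    rw [step]
    ring
end

section
/- For every nonnegative integer n and r, the r-extended Lah-Bell number satisfies the Dobinski-like formula B^L_{n,r} = (1/e) * Σ_{k=0}^{∞} ⟨k+2r⟩_n / k!, where the series converges. -/
open Finset

theorem key (n r m : ℕ) :
    (m + 2 * r).ascFactorial n = ∑ k ∈ Finset.range (n + 1), rLah r n k * m.descFactorial k := by
  cases n with
  | zero => simp [rLah]
  | succ n =>
    have h : ∀ k ∈ Finset.range (n + 2),
        rLah r (n + 1) k * m.descFactorial k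
          = (n + 1).factorial * (m.choose k * (n + 2 * r).choose (n + 1 - k)) := by
      intro k hk
      have hk' : k ≤ n + 1 := Nat.lt_succ_iff.mp (Finset.mem_range.mp hk)
      rw [rLah, if_pos hk', Nat.descFactorial_eq_factorial_mul_choose]
      have : n + 1 + 2 * r - 1 = n + 2 * r := by omega
      rw [this]
      obtain ⟨q, hq⟩ := Nat.factorial_dvd_factorial hk'
      rw [hq, Nat.mul_div_cancel_left _ k.factorial_pos]
      ring
    rw [Finset.sum_congr rfl h, ← Finset.mul_sum]
    have hv := Nat.add_choose_eq m (n + 2 * r) (n + 1)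
    rw [Finset.Nat.sum_antidiagonal_eq_sum_range_succ_mk] at hv
    rw [← hv, Nat.ascFactorial_eq_factorial_mul_choose']
    congr 2
    omega

theorem desc_div_fact (k : ℕ) :
    Summable (fun m : ℕ => (m.descFactorial k : ℝ) / m.factorial) ∧
    ∑' m : ℕ, (m.descFactorial k : ℝ) / m.factorial = Real.exp 1 := by
  set f : ℕ → ℝ := fun m => (m.descFactorial k : ℝ) / m.factorial with hf
  have hinj : Function.Injective (fun j : ℕ => j + k) := add_left_injective k
  have hzero : ∀ m ∉ Set.range (fun j : ℕ => j + k), f m = 0 := by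
    intro m hm
    have hlt : m < k := by
      by_contra h
      exact hm ⟨m - k, by simp; omega⟩
    simp [hf, Nat.descFactorial_of_lt hlt]
  have hcomp : (f ∘ fun j : ℕ => j + k) = fun j : ℕ => (1 : ℝ) / j.factorial := by
    funext j
    have h := Nat.factorial_mul_descFactorial (Nat.le_add_left k j)
    rw [Nat.add_sub_cancel] at h
    have h2 : ((j + k).descFactorial k) * j.factorial = (j + k).factorial := by
      rw [mul_comm]; exact h
    simp only [hf, Function.comp_apply]
    rw [div_eq_div_iff (by positivity) (by positivity), one_mul]
    exact_mod_cast h2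
  have hexps : Summable (fun j : ℕ => (1 : ℝ) / j.factorial) := by
    simpa using Real.summable_pow_div_factorial 1
  have hs : Summable f := by
    rw [← hinj.summable_iff hzero, hcomp]
    exact hexps
  refine ⟨hs, ?_⟩
  have ht : ∑' j : ℕ, f (j + k) = ∑' m : ℕ, f m := by
    apply hinj.tsum_eq
    intro m hm
    by_contra h
    exact hm (by simpa using hzero m (by simpa using h))
  rw [← ht]
  have : (fun j : ℕ => f (j + k)) = fun j : ℕ => (1 : ℝ) / j.factorial := hcomp
  rw [this]
  rw [Real.exp_eq_exp_ℝ, NormedSpace.exp_eq_tsum_div]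
  simp


/-- Dobinski-like formula: `B^L_{n,r} = (1/e) Σ_{k=0}^∞ ⟨k+2r⟩_n / k!`, and the series
converges. -/
theorem lahBellExt_dobinski (n r : ℕ) :
    Summable (fun k : ℕ => ((k + 2 * r).ascFactorial n : ℝ) / k.factorial) ∧
    (lahBellExt n r : ℝ) =
      (1 / Real.exp 1) * ∑' k : ℕ, ((k + 2 * r).ascFactorial n : ℝ) / k.factorial := by
  have hkey : (fun m : ℕ => ((m + 2 * r).ascFactorial n : ℝ) / m.factorial)
      = fun m : ℕ => ∑ k ∈ Finset.range (n + 1),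
          (rLah r n k : ℝ) * ((m.descFactorial k : ℝ) / m.factorial) := by
    funext m
    rw [key n r m]
    push_cast
    rw [Finset.sum_div]
    exact Finset.sum_congr rfl fun k _ => (mul_div_assoc _ _ _)
  have hterm : ∀ k ∈ Finset.range (n + 1),
      Summable (fun m : ℕ => (rLah r n k : ℝ) * ((m.descFactorial k : ℝ) / m.factorial)) :=
    fun k _ => ((desc_div_fact k).1).mul_left _
  have hs : Summable (fun m : ℕ => ((m + 2 * r).ascFactorial n : ℝ) / m.factorial) := by
    rw [hkey]
    exact summable_sum hterm
  refine ⟨hs, ?_⟩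
  have ht : ∑' m : ℕ, ((m + 2 * r).ascFactorial n : ℝ) / m.factorial
      = Real.exp 1 * lahBellExt n r := by
    rw [hkey, Summable.tsum_finsetSum hterm]
    have : ∀ k ∈ Finset.range (n + 1),
        ∑' m : ℕ, (rLah r n k : ℝ) * ((m.descFactorial k : ℝ) / m.factorial)
          = Real.exp 1 * (rLah r n k : ℝ) := by
      intro k _
      rw [tsum_mul_left, (desc_div_fact k).2, mul_comm]
    rw [Finset.sum_congr rfl this, ← Finset.mul_sum, lahBellExt]
    push_cast
    ring
  rw [ht, one_div, inv_mul_cancel_left₀ (Real.exp_ne_zero 1)]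
end

section
/- For every nonnegative integer n, r and every real x, the r-extended Lah-Bell polynomial satisfies B^L_{n,r}(x) = e^{-x} * Σ_{k=0}^{∞} ⟨k+2r⟩_n * x^k / k!, where the series converges. -/
open Finset

/-- Dobinski-like formula for the `r`-extended Lah-Bell polynomials:
`B^L_{n,r}(x) = e^{-x} Σ_{k=0}^∞ ⟨k+2r⟩_n x^k / k!`, and the series converges. -/
theorem lahBellExt_poly_dobinski (n r : ℕ) (x : ℝ) :
    Summable (fun k : ℕ => ((k + 2 * r).ascFactorial n : ℝ) * x ^ k / k.factorial) ∧
    ∑ k ∈ Finset.range (n + 1), (rLah r n k : ℝ) * x ^ k =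
      Real.exp (-x) *
        ∑' k : ℕ, ((k + 2 * r).ascFactorial n : ℝ) * x ^ k / k.factorial := by
  classical
  -- key combinatorial identity
  have key : ∀ k : ℕ, (k + 2 * r).ascFactorial n
      = ∑ j ∈ Finset.range (n + 1), rLah r n j * k.descFactorial j := by
    intro k
    rcases n with _ | m
    · simp [rLah]
    · have h1 : (k + 2 * r).ascFactorial (m + 1)
          = (m + 1).factorial * (k + (2 * r + m)).choose (m + 1) := by
        rw [Nat.ascFactorial_eq_factorial_mul_choose']
        congr 2
        omega
      rw [h1, Nat.add_choose_eq, Finset.Nat.sum_antidiagonal_eq_sum_range_succ_mk,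
        Finset.mul_sum]
      refine Finset.sum_congr rfl fun j hj => ?_
      simp only [Finset.mem_range] at hj
      have hjn : j ≤ m + 1 := by omega
      have hdiv : (m + 1).factorial / j.factorial * j.factorial = (m + 1).factorial :=
        Nat.div_mul_cancel (Nat.factorial_dvd_factorial hjn)
      have hc : m + 1 + 2 * r - 1 = 2 * r + m := by omega
      rw [rLah, if_pos hjn, Nat.descFactorial_eq_factorial_mul_choose, hc]
      calc (m + 1).factorial * (k.choose j * (2 * r + m).choose (m + 1 - j))
          = ((m + 1).factorial / j.factorial * j.factorial) *
              (k.choose j * (2 * r + m).choose (m + 1 - j)) := by rw [hdiv]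
        _ = (m + 1).factorial / j.factorial * (2 * r + m).choose (m + 1 - j) *
              (j.factorial * k.choose j) := by ring
  -- summand rewriting for shifted index
  have heq : ∀ j k : ℕ, (((k + j).descFactorial j : ℝ)) * x ^ (k + j) / (k + j).factorial
      = x ^ j * (x ^ k / k.factorial) := by
    intro j k
    have h : (k.factorial : ℝ) * ((k + j).descFactorial j : ℝ) = ((k + j).factorial : ℝ) := by
      rw [← Nat.cast_mul]
      norm_cast
      have := Nat.factorial_mul_descFactorial (show j ≤ k + j by omega)
      simpa using this
    have hk : (k.factorial : ℝ) ≠ 0 := by positivity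
    have hkj : ((k + j).factorial : ℝ) ≠ 0 := by positivity
    field_simp
    rw [pow_add, ← h]
    ring
  -- summability for each j
  have hsum : ∀ j : ℕ, Summable (fun k : ℕ => (k.descFactorial j : ℝ) * x ^ k / k.factorial) := by
    intro j
    rw [← summable_nat_add_iff j]
    have : (fun k : ℕ => ((k + j).descFactorial j : ℝ) * x ^ (k + j) / (k + j).factorial)
        = fun k : ℕ => x ^ j * (x ^ k / k.factorial) := funext fun k => heq j k
    rw [this]
    exact (Real.summable_pow_div_factorial x).mul_left _
  have hexp : ∑' k : ℕ, x ^ k / k.factorial = Real.exp x := by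
    rw [Real.exp_eq_exp_ℝ, NormedSpace.exp_eq_tsum_div]
  -- tsum for each j
  have htsum : ∀ j : ℕ, ∑' k : ℕ, (k.descFactorial j : ℝ) * x ^ k / k.factorial
      = x ^ j * Real.exp x := by
    intro j
    rw [← Summable.sum_add_tsum_nat_add j (hsum j)]
    have h0 : ∑ i ∈ Finset.range j, (i.descFactorial j : ℝ) * x ^ i / i.factorial = 0 := by
      refine Finset.sum_eq_zero fun i hi => ?_
      simp only [Finset.mem_range] at hi
      rw [Nat.descFactorial_eq_zero_iff_lt.2 hi]
      simp
    rw [h0, zero_add]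
    calc ∑' k : ℕ, ((k + j).descFactorial j : ℝ) * x ^ (k + j) / (k + j).factorial
        = ∑' k : ℕ, x ^ j * (x ^ k / k.factorial) := by
          exact tsum_congr fun k => heq j k
      _ = x ^ j * Real.exp x := by rw [tsum_mul_left, hexp]
  -- rewrite main summand as a finite sum
  have hF : ∀ k : ℕ, ((k + 2 * r).ascFactorial n : ℝ) * x ^ k / k.factorial
      = ∑ j ∈ Finset.range (n + 1),
          (rLah r n j : ℝ) * ((k.descFactorial j : ℝ) * x ^ k / k.factorial) := by
    intro k
    rw [key k]
    push_cast
    rw [Finset.sum_mul, Finset.sum_div]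
    refine Finset.sum_congr rfl fun j _ => ?_
    ring
  have hS : Summable (fun k : ℕ => ((k + 2 * r).ascFactorial n : ℝ) * x ^ k / k.factorial) := by
    have : (fun k : ℕ => ((k + 2 * r).ascFactorial n : ℝ) * x ^ k / k.factorial)
        = fun k => ∑ j ∈ Finset.range (n + 1),
            (rLah r n j : ℝ) * ((k.descFactorial j : ℝ) * x ^ k / k.factorial) :=
      funext hF
    rw [this]
    exact summable_sum fun j _ => (hsum j).mul_left _
  refine ⟨hS, ?_⟩
  have hT : ∑' k : ℕ, ((k + 2 * r).ascFactorial n : ℝ) * x ^ k / k.factorial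
      = Real.exp x * ∑ j ∈ Finset.range (n + 1), (rLah r n j : ℝ) * x ^ j := by
    calc ∑' k : ℕ, ((k + 2 * r).ascFactorial n : ℝ) * x ^ k / k.factorial
        = ∑' k : ℕ, ∑ j ∈ Finset.range (n + 1),
            (rLah r n j : ℝ) * ((k.descFactorial j : ℝ) * x ^ k / k.factorial) :=
          tsum_congr hF
      _ = ∑ j ∈ Finset.range (n + 1), ∑' k : ℕ,
            (rLah r n j : ℝ) * ((k.descFactorial j : ℝ) * x ^ k / k.factorial) :=
          Summable.tsum_finsetSum fun j _ => (hsum j).mul_left _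
      _ = ∑ j ∈ Finset.range (n + 1), (rLah r n j : ℝ) * (x ^ j * Real.exp x) := by
          refine Finset.sum_congr rfl fun j _ => ?_
          rw [tsum_mul_left, htsum j]
      _ = Real.exp x * ∑ j ∈ Finset.range (n + 1), (rLah r n j : ℝ) * x ^ j := by
          rw [Finset.mul_sum]
          exact Finset.sum_congr rfl fun j _ => by ring
  rw [hT, ← mul_assoc, ← Real.exp_add, neg_add_cancel, Real.exp_zero, one_mul]
end

section
/- For all nonnegative integers n, r, B^L_{n,r} = Σ_{k=0}^{n} (-1)^{n-k} s(n,k) B_{k,2r}, where s(n,k) are the (signed) Stirling numbers of the first kind and B_{k,2r} are the 2r-extended Bell numbers. -/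
open Finset

/-! ### Auxiliary definitions -/

/-- Unsigned Stirling numbers of the first kind. -/
def uStirling1 : ℕ → ℕ → ℕ
  | 0, 0 => 1
  | 0, _ + 1 => 0
  | n + 1, 0 => n * uStirling1 n 0
  | n + 1, k + 1 => uStirling1 n k + n * uStirling1 n (k + 1)

/-- Recursive version of the `x/2`-Lah numbers. -/
def LahA (x : ℕ) : ℕ → ℕ → ℕ
  | 0, 0 => 1
  | 0, _ + 1 => 0
  | n + 1, 0 => (n + x) * LahA x n 0
  | n + 1, k + 1 => LahA x n k + (n + k + 1 + x) * LahA x n (k + 1)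

lemma stirling2_eq_zero : ∀ n k, n < k → stirling2 n k = 0 := by
  intro n
  induction n with
  | zero => intro k hk; cases k with | zero => omega | succ k => rfl
  | succ n ih =>
    intro k hk
    cases k with
    | zero => omega
    | succ k => simp [stirling2, ih k (by omega), ih (k + 1) (by omega)]

lemma uStirling1_eq_zero : ∀ n k, n < k → uStirling1 n k = 0 := by
  intro n
  induction n with
  | zero => intro k hk; cases k with | zero => omega | succ k => rfl
  | succ n ih =>
    intro k hk
    cases k with
    | zero => omega
    | succ k => simp [uStirling1, ih k (by omega), ih (k + 1) (by omega)]

lemma stirling1_eq_zero : ∀ n k, n < k → stirling1 n k = 0 := by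
  intro n
  induction n with
  | zero => intro k hk; cases k with | zero => omega | succ k => rfl
  | succ n ih =>
    intro k hk
    cases k with
    | zero => omega
    | succ k => simp [stirling1, ih k (by omega), ih (k + 1) (by omega)]

lemma LahA_eq_zero (x : ℕ) : ∀ n k, n < k → LahA x n k = 0 := by
  intro n
  induction n with
  | zero => intro k hk; cases k with | zero => omega | succ k => rfl
  | succ n ih =>
    intro k hk
    cases k with
    | zero => omega
    | succ k => simp [LahA, ih k (by omega), ih (k + 1) (by omega)]

lemma uStirling1_zero : ∀ n, uStirling1 (n + 1) 0 = 0 := by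
  intro n
  induction n with
  | zero => rfl
  | succ n ih =>
    show (n + 1) * uStirling1 (n + 1) 0 = 0
    rw [ih, mul_zero]

lemma stirling1_eq (n : ℕ) : ∀ k, k ≤ n → stirling1 n k = (-1) ^ (n - k) * (uStirling1 n k : ℤ) := by
  induction n with
  | zero =>
    intro k hk
    interval_cases k
    simp [stirling1, uStirling1]
  | succ n ih =>
    intro k hk
    cases k with
    | zero =>
      show (0 : ℤ) = _
      rw [uStirling1_zero]
      simp
    | succ k =>
      have hk' : k ≤ n := by omega
      show stirling1 n k - (n : ℤ) * stirling1 n (k + 1) = _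
      rcases eq_or_lt_of_le hk' with rfl | hlt
      · rw [stirling1_eq_zero k (k + 1) (by omega), ih k le_rfl]
        show _ = (-1) ^ (k + 1 - (k + 1)) * ((uStirling1 k k + k * uStirling1 k (k + 1) : ℕ) : ℤ)
        rw [uStirling1_eq_zero k (k + 1) (by omega)]
        simp
      · rw [ih k hk', ih (k + 1) hlt]
        show _ = (-1) ^ (n + 1 - (k + 1)) * ((uStirling1 n k + n * uStirling1 n (k + 1) : ℕ) : ℤ)
        obtain ⟨j, hj⟩ : ∃ j, n - (k + 1) = j := ⟨_, rfl⟩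
        have h1 : n - k = j + 1 := by omega
        have h2 : n + 1 - (k + 1) = j + 1 := by omega
        rw [hj, h1, h2]
        push_cast
        ring

lemma LahA_closed (x : ℕ) : ∀ n k, k ≤ n →
    k.factorial * LahA x n k = n.factorial * Nat.choose (n + x - 1) (n - k) := by
  intro n
  induction n with
  | zero =>
    intro k hk
    interval_cases k
    simp [LahA]
  | succ n ih =>
    intro k hk
    cases k with
    | zero =>
      show 1 * ((n + x) * LahA x n 0) = _
      have h0 := ih 0 (Nat.zero_le n)
      simp only [Nat.factorial_zero, one_mul, Nat.sub_zero] at h0 ⊢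
      cases x with
      | zero =>
        cases n with
        | zero => simp [LahA]
        | succ m =>
          rw [h0]
          have h1 : m + 1 + 0 - 1 = m := by omega
          have h2 : m + 1 + 1 + 0 - 1 = m + 1 := by omega
          rw [h1, h2, Nat.choose_eq_zero_of_lt (by omega), Nat.choose_eq_zero_of_lt (by omega)]
          ring
      | succ y =>
        rw [h0]
        have h1 : n + (y + 1) - 1 = n + y := by omega
        have h2 : n + 1 + (y + 1) - 1 = n + y + 1 := by omega
        rw [h1, h2]
        have h3 := Nat.add_one_mul_choose_eq (n + y) n
        -- (n+y+1) * C(n+y, n) = C(n+y+1, n+1) * (n+1)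
        calc (n + (y + 1)) * (n.factorial * Nat.choose (n + y) n)
            = n.factorial * ((n + y).succ * Nat.choose (n + y) n) := by
              rw [Nat.succ_eq_add_one]; ring
          _ = n.factorial * ((n + y + 1).choose (n + 1) * (n + 1)) := by rw [h3]
          _ = (n + 1).factorial * (n + y + 1).choose (n + 1) := by
              rw [Nat.factorial_succ]; ring
    | succ k =>
      have hk' : k ≤ n := by omega
      show (k + 1).factorial * (LahA x n k + (n + k + 1 + x) * LahA x n (k + 1)) = _
      rcases eq_or_lt_of_le hk' with rfl | hlt
      · -- k = n
        rw [LahA_eq_zero x k (k + 1) (by omega)]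
        have h1 := ih k le_rfl
        rw [Nat.sub_self, Nat.choose_zero_right, mul_one] at h1
        have hL : LahA x k k = 1 := by
          have := Nat.eq_of_mul_eq_mul_left (Nat.factorial_pos k)
            (by rw [h1, mul_one] : k.factorial * LahA x k k = k.factorial * 1)
          exact this
        rw [hL]
        have : k + 1 - (k + 1) = 0 := by omega
        rw [this, Nat.choose_zero_right]
        ring
      · -- k < n
        have h1 := ih k hk'
        have h2 := ih (k + 1) (by omega)
        obtain ⟨b, hb⟩ : ∃ b, n - (k + 1) = b := ⟨_, rfl⟩
        have hnk : n - k = b + 1 := by omega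
        obtain ⟨m, hm⟩ : ∃ m, n + x - 1 = m := ⟨_, rfl⟩
        have hm1 : n + x = m + 1 := by omega
        have hm2 : n + 1 + x - 1 = m + 1 := by omega
        have hsub : n + 1 - (k + 1) = b + 1 := by omega
        rw [hm, hnk] at h1
        rw [hm, hb] at h2
        rw [hm2, hsub]
        have e1 := Nat.choose_succ_right_eq m b
        have emb : m - b = x + k := by omega
        rw [emb] at e1
        -- e1 : C(m, b+1) * (b+1) = C(m, b) * (x + k)
        set P := Nat.choose m b with hP
        set Q := Nat.choose m (b + 1) with hQ
        have hkey : (k + 1) * Q + (n + k + 1 + x) * P = (n + 1) * (P + Q) := by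
          have h4 : n + k + 1 + x = (n + 1) + (x + k) := by omega
          have h5 : n + 1 = b + 1 + (k + 1) := by omega
          have h6 : (n + k + 1 + x) * P = (n + 1) * P + Q * (b + 1) := by
            rw [e1, h4]; ring
          rw [h6, h5]; ring
        calc (k + 1).factorial * (LahA x n k + (n + k + 1 + x) * LahA x n (k + 1))
            = (k + 1) * (k.factorial * LahA x n k)
              + (n + k + 1 + x) * ((k + 1).factorial * LahA x n (k + 1)) := by
              rw [Nat.factorial_succ]; ring
          _ = (k + 1) * (n.factorial * Q) + (n + k + 1 + x) * (n.factorial * P) := by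
              rw [h1, h2]
          _ = n.factorial * ((k + 1) * Q + (n + k + 1 + x) * P) := by ring
          _ = n.factorial * ((n + 1) * (P + Q)) := by rw [hkey]
          _ = (n + 1).factorial * (m + 1).choose (b + 1) := by
              rw [Nat.factorial_succ, Nat.choose_succ_succ']
              ring

lemma rLah_eq (r n k : ℕ) : rLah r n k = LahA (2 * r) n k := by
  unfold rLah
  split
  · rename_i h
    have hc := LahA_closed (2 * r) n k h
    obtain ⟨t, ht⟩ := Nat.factorial_dvd_factorial h
    rw [ht, Nat.mul_div_cancel_left _ (Nat.factorial_pos k)]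
    have : k.factorial * (t * Nat.choose (n + 2 * r - 1) (n - k)) = k.factorial * LahA (2 * r) n k := by
      rw [hc, ht]; ring
    exact Nat.eq_of_mul_eq_mul_left (Nat.factorial_pos k) this
  · rename_i h
    exact (LahA_eq_zero (2 * r) n k (by omega)).symm

lemma s2p_range (n k x : ℕ) :
    stirling2Poly n k x = ∑ j ∈ range (n + 1), Nat.choose n j * x ^ (n - j) * stirling2 j k := by
  unfold stirling2Poly
  apply Finset.sum_subset
  · intro j hj
    simp only [Finset.mem_Icc] at hj
    simp only [Finset.mem_range]
    omega
  · intro j hj hj'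
    simp only [Finset.mem_Icc, Finset.mem_range] at hj hj'
    rw [stirling2_eq_zero j k (by omega), mul_zero]

lemma s2p_zero_n (k x : ℕ) : stirling2Poly 0 k x = if k = 0 then 1 else 0 := by
  rw [s2p_range]
  cases k with
  | zero => simp [stirling2]
  | succ k => simp [stirling2]

lemma s2p_zero_k (n x : ℕ) : stirling2Poly n 0 x = x ^ n := by
  rw [s2p_range]
  rw [Finset.sum_eq_single 0]
  · simp [stirling2]
  · intro j hj hj0
    cases j with
    | zero => omega
    | succ j => simp [stirling2]
  · intro h; simp at h

lemma s2p_succ (n k x : ℕ) :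
    stirling2Poly (n + 1) (k + 1) x
      = stirling2Poly n k x + (k + 1 + x) * stirling2Poly n (k + 1) x := by
  simp only [s2p_range]
  rw [Finset.sum_range_succ']
  have h0 : stirling2 0 (k + 1) = 0 := rfl
  have hC : ∑ i ∈ range (n + 1), Nat.choose n (i + 1) * x ^ (n - i) * stirling2 (i + 1) (k + 1)
      = x * ∑ j ∈ range (n + 1), Nat.choose n j * x ^ (n - j) * stirling2 j (k + 1) := by
    have h1 := Finset.sum_range_succ'
      (fun j => Nat.choose n j * x ^ (n + 1 - j) * stirling2 j (k + 1)) (n + 1)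
    have h2 := Finset.sum_range_succ
      (fun j => Nat.choose n j * x ^ (n + 1 - j) * stirling2 j (k + 1)) (n + 1)
    simp only [h0, mul_zero, add_zero, Nat.choose_self, Nat.succ_sub_succ] at h1
    rw [Nat.choose_succ_self, zero_mul, zero_mul, add_zero] at h2
    rw [h2] at h1
    rw [← h1]
    rw [Finset.mul_sum]
    apply Finset.sum_congr rfl
    intro j hj
    simp only [Finset.mem_range] at hj
    have : n + 1 - j = (n - j) + 1 := by omega
    rw [this, pow_succ]
    ring
  calc (∑ i ∈ range (n + 1),
          Nat.choose (n + 1) (i + 1) * x ^ (n + 1 - (i + 1)) * stirling2 (i + 1) (k + 1))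
        + Nat.choose (n + 1) 0 * x ^ (n + 1 - 0) * stirling2 0 (k + 1)
      = ∑ i ∈ range (n + 1),
          (Nat.choose n i * x ^ (n - i) * stirling2 i k
            + (k + 1) * (Nat.choose n i * x ^ (n - i) * stirling2 i (k + 1))
            + Nat.choose n (i + 1) * x ^ (n - i) * stirling2 (i + 1) (k + 1)) := by
        rw [h0, mul_zero, add_zero]
        apply Finset.sum_congr rfl
        intro i hi
        rw [Nat.succ_sub_succ, Nat.choose_succ_succ]
        have hs : stirling2 (i + 1) (k + 1) = (k + 1) * stirling2 i (k + 1) + stirling2 i k := rfl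
        rw [hs]
        ring
    _ = (∑ i ∈ range (n + 1), Nat.choose n i * x ^ (n - i) * stirling2 i k)
        + (k + 1) * (∑ i ∈ range (n + 1), Nat.choose n i * x ^ (n - i) * stirling2 i (k + 1))
        + ∑ i ∈ range (n + 1), Nat.choose n (i + 1) * x ^ (n - i) * stirling2 (i + 1) (k + 1) := by
        rw [Finset.sum_add_distrib, Finset.sum_add_distrib, Finset.mul_sum]
    _ = (∑ i ∈ range (n + 1), Nat.choose n i * x ^ (n - i) * stirling2 i k)
        + (k + 1 + x) * ∑ i ∈ range (n + 1), Nat.choose n i * x ^ (n - i) * stirling2 i (k + 1) := by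
        rw [hC]; ring

lemma key_s5 (x : ℕ) : ∀ n k, LahA x n k = ∑ m ∈ range (n + 1), uStirling1 n m * stirling2Poly m k x := by
  intro n
  induction n with
  | zero =>
    intro k
    rw [Finset.sum_range_one]
    show LahA x 0 k = uStirling1 0 0 * stirling2Poly 0 k x
    rw [s2p_zero_n]
    cases k with
    | zero => rfl
    | succ k => rfl
  | succ n ih =>
    intro k
    cases k with
    | zero =>
      show (n + x) * LahA x n 0 = _
      simp only [s2p_zero_k]
      rw [Finset.sum_range_succ']
      have base : LahA x n 0 = ∑ m ∈ range (n + 1), uStirling1 n m * x ^ m := by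
        simpa only [s2p_zero_k] using ih 0
      have hshift : (∑ i ∈ range (n + 1), uStirling1 n (i + 1) * x ^ (i + 1))
            + uStirling1 n 0 * x ^ 0
          = ∑ m ∈ range (n + 1), uStirling1 n m * x ^ m := by
        have h1 := Finset.sum_range_succ' (fun m => uStirling1 n m * x ^ m) (n + 1)
        have h2 := Finset.sum_range_succ (fun m => uStirling1 n m * x ^ m) (n + 1)
        rw [uStirling1_eq_zero n (n + 1) (by omega), zero_mul, add_zero] at h2
        rw [h2] at h1
        exact h1.symm
      have hterm : ∀ i ∈ range (n + 1), uStirling1 (n + 1) (i + 1) * x ^ (i + 1)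
          = uStirling1 n i * x ^ i * x + n * (uStirling1 n (i + 1) * x ^ (i + 1)) := by
        intro i _
        show (uStirling1 n i + n * uStirling1 n (i + 1)) * x ^ (i + 1) = _
        rw [pow_succ]
        ring
      rw [Finset.sum_congr rfl hterm, Finset.sum_add_distrib, ← Finset.sum_mul, ← Finset.mul_sum]
      have h00 : uStirling1 (n + 1) 0 = n * uStirling1 n 0 := rfl
      rw [h00, base, ← hshift]
      ring
    | succ k =>
      show LahA x n k + (n + k + 1 + x) * LahA x n (k + 1) = _
      rw [Finset.sum_range_succ']
      have h0 : stirling2Poly 0 (k + 1) x = 0 := by rw [s2p_zero_n]; rfl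
      have hshift : ∑ i ∈ range (n + 1), uStirling1 n (i + 1) * stirling2Poly (i + 1) (k + 1) x
          = ∑ m ∈ range (n + 1), uStirling1 n m * stirling2Poly m (k + 1) x := by
        have h1 := Finset.sum_range_succ'
          (fun m => uStirling1 n m * stirling2Poly m (k + 1) x) (n + 1)
        have h2 := Finset.sum_range_succ
          (fun m => uStirling1 n m * stirling2Poly m (k + 1) x) (n + 1)
        rw [uStirling1_eq_zero n (n + 1) (by omega), zero_mul, add_zero] at h2
        simp only [h0, mul_zero, add_zero] at h1
        rw [h2] at h1
        exact h1.symm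
      calc LahA x n k + (n + k + 1 + x) * LahA x n (k + 1)
          = (∑ m ∈ range (n + 1), uStirling1 n m * stirling2Poly m k x)
            + (n + k + 1 + x) * ∑ m ∈ range (n + 1), uStirling1 n m * stirling2Poly m (k + 1) x := by
            rw [ih k, ih (k + 1)]
        _ = ∑ i ∈ range (n + 1),
              (uStirling1 n i + n * uStirling1 n (i + 1)) * stirling2Poly (i + 1) (k + 1) x
            + uStirling1 (n + 1) 0 * stirling2Poly 0 (k + 1) x := by
            rw [h0, mul_zero, add_zero]
            have expand : ∀ i ∈ range (n + 1),
                (uStirling1 n i + n * uStirling1 n (i + 1)) * stirling2Poly (i + 1) (k + 1) x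
                = (uStirling1 n i * stirling2Poly i k x
                    + (k + 1 + x) * (uStirling1 n i * stirling2Poly i (k + 1) x))
                  + n * (uStirling1 n (i + 1) * stirling2Poly (i + 1) (k + 1) x) := by
              intro i hi
              rw [s2p_succ]
              ring
            rw [Finset.sum_congr rfl expand, Finset.sum_add_distrib, Finset.sum_add_distrib,
              ← Finset.mul_sum, ← Finset.mul_sum, hshift]
            ring
        _ = _ := by congr 1

lemma s2p_eq_zero (m k x : ℕ) (h : m < k) : stirling2Poly m k x = 0 := by
  unfold stirling2Poly
  rw [Finset.Icc_eq_empty (by omega), Finset.sum_empty]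

lemma sum_s2p (m x : ℕ) : ∑ k ∈ range (m + 1), stirling2Poly m k x = bellExt m x := by
  simp only [s2p_range]
  rw [Finset.sum_comm]
  unfold bellExt
  apply Finset.sum_congr rfl
  intro j hj
  simp only [Finset.mem_range] at hj
  rw [← Finset.mul_sum]
  congr 1
  unfold bell
  have hsub : range (j + 1) ⊆ range (m + 1) := Finset.range_subset_range.mpr (by omega)
  exact (Finset.sum_subset hsub (fun k hk hk' => by
    simp only [Finset.mem_range] at hk hk'
    exact stirling2_eq_zero j k (by omega))).symm

lemma main_nat (n r : ℕ) :
    lahBellExt n r = ∑ m ∈ range (n + 1), uStirling1 n m * bellExt m (2 * r) := by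
  unfold lahBellExt
  calc ∑ k ∈ range (n + 1), rLah r n k
      = ∑ k ∈ range (n + 1), LahA (2 * r) n k := by
        apply Finset.sum_congr rfl; intro k _; exact rLah_eq r n k
    _ = ∑ k ∈ range (n + 1), ∑ m ∈ range (n + 1), uStirling1 n m * stirling2Poly m k (2 * r) := by
        apply Finset.sum_congr rfl; intro k _; exact key_s5 (2 * r) n k
    _ = ∑ m ∈ range (n + 1), ∑ k ∈ range (n + 1), uStirling1 n m * stirling2Poly m k (2 * r) := by
        rw [Finset.sum_comm]
    _ = ∑ m ∈ range (n + 1), uStirling1 n m * bellExt m (2 * r) := by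
        apply Finset.sum_congr rfl
        intro m hm
        simp only [Finset.mem_range] at hm
        rw [← Finset.mul_sum]
        congr 1
        rw [← sum_s2p m (2 * r)]
        have hsub : range (m + 1) ⊆ range (n + 1) := Finset.range_subset_range.mpr (by omega)
        exact (Finset.sum_subset hsub (fun k hk hk' => by
          simp only [Finset.mem_range] at hk hk'
          exact s2p_eq_zero m k (2 * r) (by omega))).symm

/-- `B^L_{n,r} = Σ_{k=0}^n (-1)^{n-k} s(n,k) B_{k,2r}`, with `s(n,k)` the signed Stirling
numbers of the first kind and `B_{k,2r}` the `2r`-extended Bell numbers. -/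
theorem lahBellExt_eq_sum_stirling1_bellExt (n r : ℕ) :
    (lahBellExt n r : ℤ) =
      ∑ k ∈ Finset.range (n + 1),
        (-1) ^ (n - k) * stirling1 n k * (bellExt k (2 * r) : ℤ) := by
  have hsum : ∀ k ∈ Finset.range (n + 1),
      (-1 : ℤ) ^ (n - k) * stirling1 n k * (bellExt k (2 * r) : ℤ)
        = (uStirling1 n k : ℤ) * (bellExt k (2 * r) : ℤ) := by
    intro k hk
    simp only [Finset.mem_range] at hk
    rw [stirling1_eq n k (by omega)]
    rw [← mul_assoc, ← pow_add, Even.neg_one_pow ⟨n - k, rfl⟩, one_mul]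
  rw [Finset.sum_congr rfl hsum, main_nat n r]
  push_cast
  rfl
end

section
/- For positive integers m, k and nonnegative integers n, r with n ≥ m+k, the r-Lah numbers satisfy the convolution identity C(m+k, m) * L_{2r}(n, m+k) = Σ_{l=m}^{n-k} C(n, l) L_r(l, m) L_r(n-l, k). -/
open Finset

lemma hockey (a : ℕ) : ∀ N, ∑ i ∈ Finset.range (N+1), (a+i).choose i = (a+N+1).choose N := by
  intro N
  induction N with
  | zero => simp
  | succ N ih =>
    rw [Finset.sum_range_succ, ih]
    have h1 : a + (N+1) + 1 = (a+N+1) + 1 := by omega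
    have h2 : a + (N+1) = a + N + 1 := by omega
    rw [h1, h2, Nat.choose_succ_succ (a+N+1) N]

lemma vand (a : ℕ) : ∀ b N, ∑ i ∈ Finset.range (N+1),
    (a+i).choose i * (b+(N-i)).choose (N-i) = (a+b+(N+1)).choose N := by
  intro b
  induction b with
  | zero => intro N; simpa [add_assoc] using hockey a N
  | succ b ihb =>
    intro N
    induction N with
    | zero => simp
    | succ N ihN =>
      rw [Finset.sum_range_succ]
      have split : ∀ i ∈ Finset.range (N+1),
          (a+i).choose i * ((b+1)+(N+1-i)).choose (N+1-i) =
          (a+i).choose i * ((b+1)+(N-i)).choose (N-i)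
            + (a+i).choose i * (b+(N+1-i)).choose (N+1-i) := by
        intro i hi
        have hiN : i ≤ N := by simpa [Nat.lt_succ_iff] using hi
        have h1 : N + 1 - i = (N - i) + 1 := by omega
        rw [h1]
        have h2 : (b+1) + ((N-i)+1) = ((b+1)+(N-i)) + 1 := by omega
        have h3 : b + ((N-i)+1) = (b+1)+(N-i) := by omega
        rw [h2, Nat.choose_succ_succ ((b+1)+(N-i)) (N-i), Nat.mul_add, h3]
      rw [Finset.sum_congr rfl split, Finset.sum_add_distrib, ihN]
      have htop : (a+(N+1)).choose (N+1) * ((b+1)+(N+1-(N+1))).choose (N+1-(N+1))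
          = (a+(N+1)).choose (N+1) * (b+(N+1-(N+1))).choose (N+1-(N+1)) := by
        simp
      rw [add_assoc, htop, ← Finset.sum_range_succ
        (fun i => (a+i).choose i * (b+(N+1-i)).choose (N+1-i)) (N+1), ihb (N+1)]
      have h4 : a + (b+1) + (N+1+1) = (a+b+(N+1+1)) + 1 := by omega
      have h5 : a + (b+1) + (N+1) = a+b+(N+1+1) := by omega
      rw [h4, h5, Nat.choose_succ_succ (a+b+(N+1+1)) N]

/-- Convolution identity for the `r`-Lah numbers:
`C(m+k,m) L_{2r}(n,m+k) = Σ_{l=m}^{n-k} C(n,l) L_r(l,m) L_r(n-l,k)`. -/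
theorem rLah_convolution (m k n r : ℕ) (hm : 1 ≤ m) (hk : 1 ≤ k) (hn : m + k ≤ n) :
    Nat.choose (m + k) m * rLah (2 * r) n (m + k) =
      ∑ l ∈ Finset.Icc m (n - k), Nat.choose n l * rLah r l m * rLah r (n - l) k := by
  set N := n - m - k with hN
  have hterm : ∀ l ∈ Finset.Icc m (n-k),
      m.factorial * k.factorial * (Nat.choose n l * rLah r l m * rLah r (n - l) k)
      = n.factorial * ((l + 2*r - 1).choose (l - m) * ((n - l) + 2*r - 1).choose (n - l - k)) := by
    intro l hl
    obtain ⟨hml, hlnk⟩ := Finset.mem_Icc.mp hl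
    have hln : l ≤ n := by omega
    have hknl : k ≤ n - l := by omega
    rw [rLah, if_pos hml, rLah, if_pos hknl]
    have hp : m.factorial * (l.factorial / m.factorial) = l.factorial :=
      Nat.mul_div_cancel' (Nat.factorial_dvd_factorial hml)
    have hq : k.factorial * ((n-l).factorial / k.factorial) = (n-l).factorial :=
      Nat.mul_div_cancel' (Nat.factorial_dvd_factorial hknl)
    calc m.factorial * k.factorial * (Nat.choose n l *
            (l.factorial / m.factorial * (l + 2*r - 1).choose (l - m)) *
            ((n-l).factorial / k.factorial * ((n-l) + 2*r - 1).choose (n - l - k)))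
        = (Nat.choose n l * (m.factorial * (l.factorial / m.factorial)) *
            (k.factorial * ((n-l).factorial / k.factorial))) *
            ((l + 2*r - 1).choose (l - m) * ((n-l) + 2*r - 1).choose (n - l - k)) := by ring
      _ = (Nat.choose n l * l.factorial * (n-l).factorial) *
            ((l + 2*r - 1).choose (l - m) * ((n-l) + 2*r - 1).choose (n - l - k)) := by
            rw [hp, hq]
      _ = n.factorial * ((l + 2*r - 1).choose (l - m) * ((n-l) + 2*r - 1).choose (n - l - k)) := by
            rw [Nat.choose_mul_factorial_mul_factorial hln]
  have hL : m.factorial * k.factorial * (Nat.choose (m + k) m * rLah (2 * r) n (m + k))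
      = n.factorial * (n + 2*(2*r) - 1).choose (n - (m+k)) := by
    rw [rLah, if_pos hn]
    have hP : (m+k).factorial * (n.factorial / (m+k).factorial) = n.factorial :=
      Nat.mul_div_cancel' (Nat.factorial_dvd_factorial hn)
    have hmk : Nat.choose (m+k) m * m.factorial * k.factorial = (m+k).factorial := by
      have := Nat.choose_mul_factorial_mul_factorial (Nat.le_add_right m k)
      simpa using this
    calc m.factorial * k.factorial * (Nat.choose (m + k) m *
            (n.factorial / (m+k).factorial * (n + 2*(2*r) - 1).choose (n - (m+k))))
        = (Nat.choose (m+k) m * m.factorial * k.factorial) * (n.factorial / (m+k).factorial) *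
            (n + 2*(2*r) - 1).choose (n - (m+k)) := by ring
      _ = (m+k).factorial * (n.factorial / (m+k).factorial) *
            (n + 2*(2*r) - 1).choose (n - (m+k)) := by rw [hmk]
      _ = n.factorial * (n + 2*(2*r) - 1).choose (n - (m+k)) := by rw [hP]
  apply Nat.eq_of_mul_eq_mul_left
    (show 0 < m.factorial * k.factorial from
      Nat.mul_pos (Nat.factorial_pos m) (Nat.factorial_pos k))
  rw [Finset.mul_sum, Finset.sum_congr rfl hterm, hL, ← Finset.mul_sum]
  congr 1
  rw [← Finset.Ico_add_one_right_eq_Icc, Finset.sum_Ico_eq_sum_range]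
  have hNr : n - k + 1 - m = N + 1 := by omega
  rw [hNr]
  have hcong : ∀ i ∈ Finset.range (N+1),
      ((m+i) + 2*r - 1).choose ((m+i) - m) * ((n - (m+i)) + 2*r - 1).choose (n - (m+i) - k)
      = ((m + 2*r - 1) + i).choose i * ((k + 2*r - 1) + (N - i)).choose (N - i) := by
    intro i hi
    have hiN : i ≤ N := by simpa [Nat.lt_succ_iff] using hi
    have e1 : (m+i) + 2*r - 1 = (m + 2*r - 1) + i := by omega
    have e2 : (m+i) - m = i := by omega
    have e3 : (n - (m+i)) + 2*r - 1 = (k + 2*r - 1) + (N - i) := by omega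
    have e4 : n - (m+i) - k = N - i := by omega
    rw [e1, e2, e3, e4]
  rw [Finset.sum_congr rfl hcong, vand (m + 2*r - 1) (k + 2*r - 1) N]
  congr 1 <;> omega
end

section
/- Let X be a Poisson random variable with parameter α > 0. Then for every nonnegative integer n, E[⟨X⟩_n] = B^L_n(α), i.e., the rising factorial moment Σ_{i=0}^{∞} ⟨i⟩_n e^{-α} α^i / i! equals the Lah-Bell polynomial B^L_n(α) = Σ_{k=0}^{n} L(n,k) α^k. -/
open Finset

/-- The rising factorial expands in falling factorials with Lah coefficients. -/
lemma ascFactorial_eq_sum_rLah_descFactorial_s12 (i n : ℕ) :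
    i.ascFactorial n = ∑ k ∈ range (n + 1), rLah 0 n k * i.descFactorial k := by
  cases n with
  | zero => simp [rLah]
  | succ m =>
    rw [Nat.ascFactorial_eq_factorial_mul_choose']
    have h1 : i + (m + 1) - 1 = i + m := by omega
    rw [h1, Nat.add_choose_eq, Finset.Nat.sum_antidiagonal_eq_sum_range_succ_mk, Finset.mul_sum]
    refine Finset.sum_congr rfl fun k hk => ?_
    have hk' : k ≤ m + 1 := by simpa [Nat.lt_succ_iff] using hk
    have hdvd : k.factorial ∣ (m + 1).factorial := Nat.factorial_dvd_factorial hk'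
    rw [rLah, if_pos hk', Nat.descFactorial_eq_factorial_mul_choose]
    simp only [Nat.mul_zero, Nat.add_zero, Nat.add_sub_cancel]
    rw [mul_mul_mul_comm, Nat.div_mul_cancel hdvd, mul_comm (m.choose (m + 1 - k)) (i.choose k)]

lemma desc_shift (α : ℝ) (k j : ℕ) :
    ((j + k).descFactorial k : ℝ) * α ^ (j + k) / (j + k).factorial
      = α ^ k * (α ^ j / j.factorial) := by
  have hfac : (j + k - k).factorial * (j + k).descFactorial k = (j + k).factorial :=
    Nat.factorial_mul_descFactorial (Nat.le_add_left k j)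
  rw [Nat.add_sub_cancel] at hfac
  have hf : ((j + k).factorial : ℝ) = j.factorial * (j + k).descFactorial k := by
    exact_mod_cast hfac.symm
  have hd : ((j + k).descFactorial k : ℝ) ≠ 0 := by
    have : (j + k).descFactorial k ≠ 0 := by
      simp [Nat.descFactorial_eq_zero_iff_lt]
    exact_mod_cast this
  have hj : (j.factorial : ℝ) ≠ 0 := by exact_mod_cast j.factorial_ne_zero
  rw [hf, pow_add]
  field_simp

lemma summable_desc (α : ℝ) (k : ℕ) :
    Summable (fun i : ℕ => (i.descFactorial k : ℝ) * α ^ i / i.factorial) := by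
  rw [← summable_nat_add_iff k]
  simp only [desc_shift]
  exact (Real.summable_pow_div_factorial α).mul_left _

lemma tsum_desc (α : ℝ) (k : ℕ) :
    ∑' i : ℕ, (i.descFactorial k : ℝ) * α ^ i / i.factorial = α ^ k * Real.exp α := by
  rw [← Summable.sum_add_tsum_nat_add k (summable_desc α k)]
  have h0 : ∀ i ∈ range k, (i.descFactorial k : ℝ) * α ^ i / i.factorial = 0 := by
    intro i hi
    rw [Nat.descFactorial_eq_zero_iff_lt.mpr (mem_range.mp hi)]
    simp
  rw [Finset.sum_eq_zero h0, zero_add]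
  simp only [desc_shift]
  rw [tsum_mul_left, Real.exp_eq_exp_ℝ, NormedSpace.exp_eq_tsum_div]

/-- For a Poisson random variable `X` with parameter `α > 0`, the rising factorial moment
`E[⟨X⟩_n] = Σ_i ⟨i⟩_n e^{-α} α^i/i!` equals the Lah-Bell polynomial `B^L_n(α) = Σ_k L(n,k) α^k`. -/
theorem poisson_ascFactorial_moment (α : ℝ) (hα : 0 < α) (n : ℕ) :
    ∑' i : ℕ, (i.ascFactorial n : ℝ) * Real.exp (-α) * α ^ i / i.factorial =
      ∑ k ∈ Finset.range (n + 1), (rLah 0 n k : ℝ) * α ^ k := by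
  have h1 : ∀ i : ℕ, (i.ascFactorial n : ℝ) * Real.exp (-α) * α ^ i / i.factorial
      = ∑ k ∈ range (n + 1),
          ((rLah 0 n k : ℝ) * Real.exp (-α)) * ((i.descFactorial k : ℝ) * α ^ i / i.factorial) := by
    intro i
    have hc : (i.ascFactorial n : ℝ)
        = ∑ k ∈ range (n + 1), (rLah 0 n k : ℝ) * (i.descFactorial k : ℝ) := by
      rw [ascFactorial_eq_sum_rLah_descFactorial_s12 i n]
      push_cast
      rfl
    rw [hc, Finset.sum_mul, Finset.sum_mul, Finset.sum_div]
    refine Finset.sum_congr rfl fun k _ => ?_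
    ring
  rw [tsum_congr h1, Summable.tsum_finsetSum (fun k _ => (summable_desc α k).mul_left _)]
  refine Finset.sum_congr rfl fun k _ => ?_
  rw [tsum_mul_left, tsum_desc]
  have hexp : Real.exp (-α) * Real.exp α = 1 := by
    rw [← Real.exp_add]; simp
  calc (rLah 0 n k : ℝ) * Real.exp (-α) * (α ^ k * Real.exp α)
      = (rLah 0 n k : ℝ) * α ^ k * (Real.exp (-α) * Real.exp α) := by ring
    _ = (rLah 0 n k : ℝ) * α ^ k := by rw [hexp, mul_one]
end

section
/- Let X be a Poisson random variable with parameter α > 0 and r a nonnegative integer. Then for every nonnegative integer n, E[⟨X+2r⟩_n] = B^L_{n,r}(α), i.e., Σ_{i=0}^{∞} ⟨i+2r⟩_n e^{-α} α^i / i! = Σ_{k=0}^{n} L_r(n,k) α^k. -/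
open Finset

/-- Key combinatorial identity: `⟨x+2r⟩_n = Σ_k L_r(n,k) (x)_k`. -/
lemma rLah_key (r n x : ℕ) :
    (x + 2 * r).ascFactorial n = ∑ k ∈ Finset.range (n + 1), rLah r n k * x.descFactorial k := by
  rcases Nat.eq_zero_or_pos n with hn | hn
  · subst hn; simp [rLah]
  · rw [Nat.ascFactorial_eq_factorial_mul_choose']
    have h1 : x + 2 * r + n - 1 = x + (n + 2 * r - 1) := by omega
    rw [h1, Nat.add_choose_eq, Finset.Nat.sum_antidiagonal_eq_sum_range_succ_mk,
      Finset.mul_sum]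
    refine Finset.sum_congr rfl fun k hk => ?_
    have hkn : k ≤ n := Nat.lt_succ_iff.mp (Finset.mem_range.mp hk)
    rw [rLah, if_pos hkn, Nat.descFactorial_eq_factorial_mul_choose]
    have hdvd : k.factorial ∣ n.factorial := Nat.factorial_dvd_factorial hkn
    have hmain : n.factorial / k.factorial * (n + 2 * r - 1).choose (n - k) *
          (k.factorial * x.choose k)
        = n.factorial * (x.choose k * (n + 2 * r - 1).choose (n - k)) := by
      calc n.factorial / k.factorial * (n + 2 * r - 1).choose (n - k) *
            (k.factorial * x.choose k)
          = n.factorial / k.factorial * k.factorial *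
            ((n + 2 * r - 1).choose (n - k) * x.choose k) := by ring
        _ = n.factorial * (x.choose k * (n + 2 * r - 1).choose (n - k)) := by
            rw [Nat.div_mul_cancel hdvd]; ring
    exact hmain.symm

lemma aux_comp (α : ℝ) (k : ℕ) :
    (fun j : ℕ => ((j + k).descFactorial k : ℝ) * Real.exp (-α) * α ^ (j + k) /
        (j + k).factorial) =
      fun j : ℕ => Real.exp (-α) * α ^ k * (α ^ j / j.factorial) := by
  funext j
  have hnat : (j + k).descFactorial k * j.factorial = (j + k).factorial := by
    rw [Nat.descFactorial_eq_factorial_mul_choose]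
    rw [show k.factorial * (j + k).choose k * j.factorial
        = (j + k).choose k * j.factorial * k.factorial by ring]
    exact Nat.add_choose_mul_factorial_mul_factorial j k
  have h : ((j + k).descFactorial k : ℝ) * j.factorial = (j + k).factorial := by
    exact_mod_cast hnat
  have hj : (j.factorial : ℝ) ≠ 0 := Nat.cast_ne_zero.mpr j.factorial_ne_zero
  have hjk : ((j + k).factorial : ℝ) ≠ 0 := Nat.cast_ne_zero.mpr (j + k).factorial_ne_zero
  field_simp
  rw [pow_add]
  linear_combination (α ^ j * α ^ k) * h

lemma poisson_descFactorial_summable (α : ℝ) (k : ℕ) :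
    Summable (fun i : ℕ => (i.descFactorial k : ℝ) * Real.exp (-α) * α ^ i / i.factorial) := by
  have hinj : Function.Injective (fun j : ℕ => j + k) := add_left_injective k
  rw [← hinj.summable_iff]
  · rw [show ((fun i : ℕ => (i.descFactorial k : ℝ) * Real.exp (-α) * α ^ i / i.factorial) ∘
        fun j : ℕ => j + k) = fun j : ℕ => Real.exp (-α) * α ^ k * (α ^ j / j.factorial)
        from aux_comp α k]
    exact (Real.summable_pow_div_factorial α).mul_left _
  · intro x hx
    have hxk : x < k := by
      by_contra h
      exact hx ⟨x - k, by show x - k + k = x; omega⟩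
    simp [Nat.descFactorial_eq_zero_iff_lt.mpr hxk]

lemma poisson_descFactorial_moment (α : ℝ) (k : ℕ) :
    ∑' i : ℕ, (i.descFactorial k : ℝ) * Real.exp (-α) * α ^ i / i.factorial = α ^ k := by
  have hinj : Function.Injective (fun j : ℕ => j + k) := add_left_injective k
  have hsupp : Function.support
      (fun i : ℕ => (i.descFactorial k : ℝ) * Real.exp (-α) * α ^ i / i.factorial) ⊆
      Set.range (fun j : ℕ => j + k) := by
    intro x hx
    by_contra h
    have hxk : x < k := by
      by_contra h'
      exact h ⟨x - k, by show x - k + k = x; omega⟩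
    apply hx
    simp [Nat.descFactorial_eq_zero_iff_lt.mpr hxk]
  rw [← hinj.tsum_eq hsupp]
  have := aux_comp α k
  simp only [funext_iff] at this
  rw [tsum_congr this, tsum_mul_left]
  have hexp : ∑' j : ℕ, α ^ j / (j.factorial : ℝ) = Real.exp α := by
    rw [Real.exp_eq_exp_ℝ, NormedSpace.exp_eq_tsum_div]
  rw [hexp]
  rw [show Real.exp (-α) * α ^ k * Real.exp α = Real.exp (-α) * Real.exp α * α ^ k by ring,
    ← Real.exp_add, neg_add_cancel, Real.exp_zero, one_mul]

/-- For a Poisson random variable `X` with parameter `α > 0`,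
`E[⟨X+2r⟩_n] = B^L_{n,r}(α)`, i.e.
`Σ_i ⟨i+2r⟩_n e^{-α} α^i/i! = Σ_k L_r(n,k) α^k`. -/
theorem poisson_shifted_ascFactorial_moment (α : ℝ) (hα : 0 < α) (n r : ℕ) :
    ∑' i : ℕ, ((i + 2 * r).ascFactorial n : ℝ) * Real.exp (-α) * α ^ i / i.factorial =
      ∑ k ∈ Finset.range (n + 1), (rLah r n k : ℝ) * α ^ k := by
  have hstep : ∀ i : ℕ, ((i + 2 * r).ascFactorial n : ℝ) * Real.exp (-α) * α ^ i / i.factorial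
      = ∑ k ∈ Finset.range (n + 1),
          (rLah r n k : ℝ) * ((i.descFactorial k : ℝ) * Real.exp (-α) * α ^ i / i.factorial) := by
    intro i
    have := rLah_key r n i
    have hcast : ((i + 2 * r).ascFactorial n : ℝ)
        = ∑ k ∈ Finset.range (n + 1), (rLah r n k : ℝ) * (i.descFactorial k : ℝ) := by
      exact_mod_cast congrArg (Nat.cast : ℕ → ℝ) this
    rw [hcast, Finset.sum_mul, Finset.sum_mul, Finset.sum_div]
    exact Finset.sum_congr rfl fun k _ => by ring
  rw [tsum_congr hstep, Summable.tsum_finsetSum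
    (fun k _ => ((poisson_descFactorial_summable α k).mul_left _))]
  refine Finset.sum_congr rfl fun k _ => ?_
  rw [tsum_mul_left, poisson_descFactorial_moment]
end

section
/- The exponential generating function of the r-extended Lah-Bell numbers is e^{t/(1-t)} (1-t)^{-2r}, i.e., as formal power series (or for |t| < 1), Σ_{n=0}^{∞} B^L_{n,r} t^n/n! = e^{1/(1-t) - 1} (1/(1-t))^{2r}. -/
open Finset

lemma aux_zero {s : ℝ} :
    HasSum (fun m : ℕ => (Nat.choose (m - 1) m : ℝ) * s ^ m) 1 := by
  have h : HasSum (fun m : ℕ => (Nat.choose (m - 1) m : ℝ) * s ^ m)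
      ((Nat.choose (0 - 1) 0 : ℝ) * s ^ 0) :=
    hasSum_single 0 (fun m hm => by
      obtain ⟨m, rfl⟩ := Nat.exists_eq_succ_of_ne_zero hm
      simp [Nat.choose_succ_self])
  simpa using h

lemma aux_row (r k : ℕ) {s : ℝ} (hs : |s| < 1) :
    HasSum (fun m : ℕ => (Nat.choose (k + m + 2*r - 1) m : ℝ) / k.factorial * s ^ (k+m))
      (s ^ k / k.factorial * (1/(1-s)) ^ (k + 2*r)) := by
  rcases Nat.eq_zero_or_pos (k + 2*r) with h0 | hpos
  · obtain ⟨hk, hr⟩ : k = 0 ∧ r = 0 := by omega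
    subst hk hr
    simpa using aux_zero (s := s)
  · obtain ⟨d, hd⟩ : ∃ d, k + 2*r = d + 1 := ⟨k + 2*r - 1, by omega⟩
    have h := (hasSum_choose_mul_geometric_of_norm_lt_one d (r := s)
      (by rwa [Real.norm_eq_abs])).mul_left (s ^ k / k.factorial)
    have heq : ∀ m : ℕ, s ^ k / k.factorial * ((Nat.choose (m + d) d : ℝ) * s ^ m)
        = (Nat.choose (k + m + 2*r - 1) m : ℝ) / k.factorial * s ^ (k+m) := by
      intro m
      have h1 : k + m + 2*r - 1 = m + d := by omega
      have h2 : Nat.choose (m + d) d = Nat.choose (m + d) m := by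
        rw [← Nat.choose_symm (Nat.le_add_left d m)]; congr 1; omega
      rw [h1, ← h2, pow_add]; ring
    have h3 : s ^ k / k.factorial * (1 / (1 - s) ^ (d+1))
        = s ^ k / k.factorial * (1/(1-s)) ^ (k + 2*r) := by
      rw [hd, one_div_pow]
    rw [h3] at h
    exact h.congr_fun (fun m => (heq m).symm)

lemma aux_col {s : ℝ} (hs : |s| < 1) (r : ℕ) :
    HasSum (fun k : ℕ => s ^ k / k.factorial * (1/(1-s)) ^ (k + 2*r))
      (Real.exp (1/(1-s) - 1) * (1/(1-s)) ^ (2*r)) := by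
  have hs1 : (1 : ℝ) - s ≠ 0 := by
    intro h; rw [sub_eq_zero] at h; rw [← h] at hs; simp at hs
  have harg : s * (1/(1-s)) = 1/(1-s) - 1 := by field_simp; ring
  have h := ((NormedSpace.expSeries_div_hasSum_exp (s * (1/(1-s))))).mul_right
    ((1/(1-s)) ^ (2*r))
  rw [← Real.exp_eq_exp_ℝ,
    show Real.exp (s * (1/(1-s))) = Real.exp (1/(1-s) - 1) by rw [harg]] at h
  refine h.congr_fun fun k => ?_
  rw [mul_pow, pow_add]
  ring

/-- The exponential generating function of the `r`-extended Lah-Bell numbers: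
for `|t| < 1`, `Σ_n B^L_{n,r} t^n/n! = e^{1/(1-t) - 1} (1/(1-t))^{2r}`,
and the series converges. -/
theorem lahBellExt_egf (r : ℕ) (t : ℝ) (ht : |t| < 1) :
    Summable (fun n : ℕ => (lahBellExt n r : ℝ) * t ^ n / n.factorial) ∧
    ∑' n : ℕ, (lahBellExt n r : ℝ) * t ^ n / n.factorial =
      Real.exp (1 / (1 - t) - 1) * (1 / (1 - t)) ^ (2 * r) := by
  set F : ℕ × ℕ → ℝ :=
    fun p => (Nat.choose (p.1 + p.2 + 2*r - 1) p.2 : ℝ) / p.1.factorial * t ^ (p.1 + p.2)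
    with hFdef
  have habs : |(|t|)| < 1 := by rwa [abs_abs]
  -- summability of norms
  have hnormF : ∀ p : ℕ × ℕ, ‖F p‖ =
      (Nat.choose (p.1 + p.2 + 2*r - 1) p.2 : ℝ) / p.1.factorial * |t| ^ (p.1 + p.2) := by
    intro p
    rw [hFdef]
    simp only [Real.norm_eq_abs, abs_mul, abs_div, abs_pow, Nat.abs_cast]
  have hnorm : Summable fun p : ℕ × ℕ => ‖F p‖ := by
    have hnn : 0 ≤ fun p : ℕ × ℕ => ‖F p‖ := fun p => norm_nonneg _
    rw [summable_prod_of_nonneg hnn]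
    constructor
    · intro k
      have := (aux_row r k habs).summable
      refine this.congr fun m => ?_
      exact (hnormF (k, m)).symm
    · have hcol := (aux_col habs r).summable
      refine hcol.congr fun k => ?_
      have hrow : HasSum (fun m => ‖F (k, m)‖)
          (|t| ^ k / k.factorial * (1/(1-|t|)) ^ (k + 2*r)) :=
        (aux_row r k habs).congr_fun fun m => hnormF (k, m)
      exact hrow.tsum_eq.symm
  have hF : Summable F := hnorm.of_norm
  -- value of the double sum
  have htsum : ∑' p : ℕ × ℕ, F p =
      Real.exp (1 / (1 - t) - 1) * (1 / (1 - t)) ^ (2 * r) := by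
    rw [Summable.tsum_prod hF]
    rw [← (aux_col ht r).tsum_eq]
    exact tsum_congr fun k => (aux_row r k ht).tsum_eq
  have hFS : HasSum F (Real.exp (1 / (1 - t) - 1) * (1 / (1 - t)) ^ (2 * r)) := by
    rw [← htsum]; exact hF.hasSum
  -- regroup along antidiagonals
  have hsig : HasSum (F ∘ Finset.HasAntidiagonal.sigmaAntidiagonalEquivProd)
      (Real.exp (1 / (1 - t) - 1) * (1 / (1 - t)) ^ (2 * r)) :=
    (Equiv.hasSum_iff _).2 hFS
  have hout : HasSum (fun n : ℕ => ∑ p ∈ Finset.HasAntidiagonal.antidiagonal n, F p)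
      (Real.exp (1 / (1 - t) - 1) * (1 / (1 - t)) ^ (2 * r)) := by
    refine hsig.sigma fun n => ?_
    have := hasSum_fintype (fun p : (Finset.HasAntidiagonal.antidiagonal n : Finset (ℕ × ℕ)) => F p)
    rwa [Finset.sum_coe_sort] at this
  -- identify the antidiagonal sums
  have hdiag : ∀ n : ℕ, ∑ p ∈ Finset.HasAntidiagonal.antidiagonal n, F p =
      (lahBellExt n r : ℝ) * t ^ n / n.factorial := by
    intro n
    rw [Finset.Nat.sum_antidiagonal_eq_sum_range_succ_mk]
    rw [lahBellExt, Nat.cast_sum, Finset.sum_mul, Finset.sum_div]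
    refine Finset.sum_congr rfl fun k hk => ?_
    have hkn : k ≤ n := Nat.lt_succ_iff.1 (Finset.mem_range.1 hk)
    have hkn' : k + (n - k) = n := by omega
    rw [hFdef]
    simp only
    rw [hkn', rLah, if_pos hkn, Nat.cast_mul,
      Nat.cast_div (Nat.factorial_dvd_factorial hkn)
        (by exact_mod_cast Nat.factorial_ne_zero k)]
    have h1 : (n.factorial : ℝ) ≠ 0 := by exact_mod_cast Nat.factorial_ne_zero n
    have h2 : (k.factorial : ℝ) ≠ 0 := by exact_mod_cast Nat.factorial_ne_zero k
    field_simp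
  rw [← funext hdiag] at *
  exact ⟨hout.summable, hout.tsum_eq⟩
end

section
/- For every nonnegative integer k and r, as formal power series, Σ_{n=k}^{∞} L_r(n,k) t^n/n! = (1/k!) (t/(1-t))^k (1/(1-t))^{2r}. -/
open Finset

/-- Generating function of the `r`-Lah numbers: for `|t| < 1`,
`Σ_{n≥k} L_r(n,k) t^n/n! = (1/k!) (t/(1-t))^k (1/(1-t))^{2r}`, and the series converges.
(Here `L_r(n,k) = 0` for `n < k`, so the sum may run over all `n`.) -/
theorem rLah_egf (k r : ℕ) (t : ℝ) (ht : |t| < 1) :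
    Summable (fun n : ℕ => (rLah r n k : ℝ) * t ^ n / n.factorial) ∧
    ∑' n : ℕ, (rLah r n k : ℝ) * t ^ n / n.factorial =
      (1 / k.factorial : ℝ) * (t / (1 - t)) ^ k * (1 / (1 - t)) ^ (2 * r) := by
  have ht1 : (1 : ℝ) - t ≠ 0 := by
    have h := abs_lt.mp ht
    intro h0; linarith
  have key : HasSum (fun n : ℕ => (rLah r n k : ℝ) * t ^ n / n.factorial)
      ((1 / k.factorial : ℝ) * (t / (1 - t)) ^ k * (1 / (1 - t)) ^ (2 * r)) := by
    rcases Nat.eq_zero_or_pos (k + 2 * r) with hs | hs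
    · obtain ⟨hk, hr⟩ : k = 0 ∧ r = 0 := by omega
      subst hk; subst hr
      have hfun : (fun n : ℕ => (rLah 0 n 0 : ℝ) * t ^ n / n.factorial)
          = fun n : ℕ => if n = 0 then (1 : ℝ) else 0 := by
        funext n
        rcases n with _ | n
        · simp [rLah]
        · have : Nat.choose n (n + 1) = 0 := Nat.choose_eq_zero_of_lt (Nat.lt_succ_self n)
          simp [rLah, this]
      rw [hfun]
      simpa using hasSum_ite_eq (0 : ℕ) (1 : ℝ)
    · set s := k + 2 * r with hsdef
      have hnorm : ‖t‖ < 1 := by rwa [Real.norm_eq_abs]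
      have h1 : HasSum (fun m : ℕ => ((m + (s - 1)).choose (s - 1) : ℝ) * t ^ m)
          (1 / (1 - t) ^ ((s - 1) + 1)) :=
        hasSum_choose_mul_geometric_of_norm_lt_one (s - 1) hnorm
      have h2 := h1.mul_right (t ^ k / k.factorial)
      have hfk : (k.factorial : ℝ) ≠ 0 := Nat.cast_ne_zero.mpr k.factorial_ne_zero
      have heq : (fun m : ℕ => ((m + (s - 1)).choose (s - 1) : ℝ) * t ^ m * (t ^ k / k.factorial))
          = fun m : ℕ => (rLah r (m + k) k : ℝ) * t ^ (m + k) / (m + k).factorial := by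
        funext m
        have hkn : k ≤ m + k := Nat.le_add_left k m
        have hsub : m + k - k = m := by omega
        have hc : m + k + 2 * r - 1 = m + (s - 1) := by omega
        have hc2 : (m + (s - 1)).choose (s - 1) = (m + (s - 1)).choose m := by
          rw [← Nat.choose_symm (Nat.le_add_left (s - 1) m)]
          congr 1
          omega
        rw [rLah, if_pos hkn, hsub, hc, ← hc2]
        have hdvd : k.factorial ∣ (m + k).factorial :=
          Nat.factorial_dvd_factorial hkn
        have hcast : (((m + k).factorial / k.factorial : ℕ) : ℝ)
            = ((m + k).factorial : ℝ) / (k.factorial : ℝ) := by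
          rw [Nat.cast_div hdvd hfk]
        push_cast [hcast]
        have hmk : ((m + k).factorial : ℝ) ≠ 0 := Nat.cast_ne_zero.mpr (m + k).factorial_ne_zero
        field_simp
        ring
      rw [heq] at h2
      apply (hasSum_nat_add_iff' k).mp
      convert h2 using 1
      · rfl
      · have hz : ∑ i ∈ Finset.range k, (rLah r i k : ℝ) * t ^ i / i.factorial = 0 := by
          apply Finset.sum_eq_zero
          intro i hi
          simp only [Finset.mem_range] at hi
          rw [rLah, if_neg (by omega)]
          simp
        rw [hz, sub_zero]
        have hpow : ((s - 1) + 1) = s := by omega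
        rw [hpow, hsdef, pow_add]
        field_simp
        rw [mul_right_comm _ _ ((1 - t) ^ k), ← mul_pow, div_mul_cancel₀ _ ht1, mul_assoc, ← mul_pow, one_div_mul_cancel ht1, one_pow, mul_one]
  exact ⟨key.summable, key.tsum_eq⟩
end
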